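/- Let λ ∈ (1,+∞)∖ℕ and let the weight profile φ : [0,1] → (0,1] be one of: φ(x) = 1, φ(x) = 1−x (on its positivity domain extended positively), φ(x) = 1−x², φ(x) = (1−x²)², φ(x) = (1−x³)³, φ(x) = (1−x²)³, or φ(x) = e^{−ξx} with ξ > 0; set w_l = φ(|l|/λ) for |l| < λ. Then the scheme S_{1,w^λ} preserves monotonicity: for every bounded nondecreasing initial sequence f⁰ (f⁰_j ≤ f⁰_{j+1} for all j ∈ ℤ), the limit function S_{1,w^λ}^∞ f⁰ : ℝ → ℝ is nondecreasing. -/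

import Mathlib

open scoped Classical

/-- The degree-0/1 WLPR subdivision operator `S_{1,w^λ}` with bandwidth `λ` and
(even) weight function `ω`; for `m = 2j+i` it is the normalized rule
`(S f)_{2j+i} = ∑_l (w_{2l−i} / ∑_k w_{2k−i}) f_{j+l}` with `w_l = ω(l/λ)`,
restricted to `|2l−i| < λ`. -/
noncomputable def Swlpr (lam : ℝ) (ω : ℝ → ℝ) (f : ℤ → ℝ) : ℤ → ℝ := fun m =>
  (∑ᶠ l : ℤ, (if |((2 * l - m : ℤ) : ℝ)| < lam
      then ω (((2 * l - m : ℤ) : ℝ) / lam) else 0) * f l) /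
  (∑ᶠ l : ℤ, if |((2 * l - m : ℤ) : ℝ)| < lam
      then ω (((2 * l - m : ℤ) : ℝ) / lam) else 0)

/-- A bounded real sequence indexed by `ℤ`. -/
def IsBoundedSeq (f : ℤ → ℝ) : Prop := ∃ M : ℝ, ∀ j : ℤ, |f j| ≤ M

/-- `S^k f⁰` converges uniformly to `F`:
`lim_{k→∞} sup_{j∈ℤ} |(S^k f⁰)_j − F(2^{−k} j)| = 0`. -/
def ConvergesUniformlyTo (S : (ℤ → ℝ) → (ℤ → ℝ)) (f : ℤ → ℝ) (F : ℝ → ℝ) : Prop :=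
  ∀ ε : ℝ, 0 < ε → ∃ K : ℕ, ∀ k : ℕ, K ≤ k → ∀ j : ℤ,
    |(S^[k] f) j - F ((j : ℝ) / 2 ^ k)| ≤ ε

namespace Stmt14Aux

/-- Symmetric weight `a_t = φ(|t|/λ)` for `|t| < λ`, else `0`. -/
noncomputable def wA (lam : ℝ) (φ : ℝ → ℝ) (t : ℤ) : ℝ :=
  if |(t : ℝ)| < lam then φ (|(t : ℝ)| / lam) else 0

/-- The properties of the weight profile that we need. -/
structure GoodPhi (φ : ℝ → ℝ) : Prop where
  pos : ∀ x : ℝ, 0 ≤ x → x < 1 → 0 < φ x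
  mono : ∀ x y : ℝ, 0 ≤ x → x ≤ y → y < 1 → φ y ≤ φ x
  lc : ∀ x h : ℝ, 0 ≤ h → 0 ≤ x - h → x + h < 1 → φ (x - h) * φ (x + h) ≤ φ x ^ 2

variable {lam : ℝ} {φ : ℝ → ℝ}

lemma wA_nonneg (hG : GoodPhi φ) (hlam : 0 < lam) (t : ℤ) : 0 ≤ wA lam φ t := by
  unfold wA
  split_ifs with h
  · exact (hG.pos _ (div_nonneg (abs_nonneg _) hlam.le) ((div_lt_one hlam).2 h)).le
  · exact le_rfl

lemma wA_pos (hG : GoodPhi φ) (hlam : 0 < lam) {t : ℤ} (h : |(t : ℝ)| < lam) :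
    0 < wA lam φ t := by
  unfold wA
  rw [if_pos h]
  exact hG.pos _ (div_nonneg (abs_nonneg _) hlam.le) ((div_lt_one hlam).2 h)

lemma wA_neg (lam : ℝ) (φ : ℝ → ℝ) (t : ℤ) : wA lam φ (-t) = wA lam φ t := by simp [wA]

lemma wA_anti (hG : GoodPhi φ) (hlam : 0 < lam) {t t' : ℤ} (ht : 0 ≤ t) (htt : t ≤ t') :
    wA lam φ t' ≤ wA lam φ t := by
  have ht0 : (0 : ℝ) ≤ (t : ℝ) := by exact_mod_cast ht
  have htt' : (t : ℝ) ≤ (t' : ℝ) := by exact_mod_cast htt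
  have h1 : |(t : ℝ)| = (t : ℝ) := abs_of_nonneg ht0
  have h2 : |(t' : ℝ)| = (t' : ℝ) := abs_of_nonneg (le_trans ht0 htt')
  unfold wA
  split_ifs with ha hb hb
  · rw [h1, h2]
    exact hG.mono _ _ (div_nonneg ht0 hlam.le)
      (by gcongr)
      ((div_lt_one hlam).2 (h2 ▸ ha))
  · exfalso; apply hb; rw [h1]; rw [h2] at ha; linarith
  · exact (hG.pos _ (div_nonneg (abs_nonneg _) hlam.le) ((div_lt_one hlam).2 hb)).le
  · exact le_rfl


/-- log-concavity step at integer points. -/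
lemma wA_lc_step (hG : GoodPhi φ) (hlam : 0 < lam) (n : ℕ) :
    wA lam φ n * wA lam φ ((n : ℤ) + 2) ≤ wA lam φ ((n : ℤ) + 1) ^ 2 := by
  by_cases h2 : |(((n : ℤ) + 2 : ℤ) : ℝ)| < lam
  · have hcast : (((n : ℤ) + 2 : ℤ) : ℝ) = (n : ℝ) + 2 := by push_cast; ring
    have hn2 : (n : ℝ) + 2 < lam := by
      rw [hcast] at h2; rw [abs_of_nonneg (by positivity)] at h2; exact h2
    have hn0 : |((n : ℤ) : ℝ)| < lam := by
      rw [Int.cast_natCast, abs_of_nonneg (by positivity)]; linarith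
    have hn1 : |(((n : ℤ) + 1 : ℤ) : ℝ)| < lam := by
      push_cast; rw [abs_of_nonneg (by positivity)]; linarith
    unfold wA
    rw [if_pos hn0, if_pos hn1, if_pos h2]
    have e0 : |((n : ℤ) : ℝ)| = (n : ℝ) := by rw [Int.cast_natCast, abs_of_nonneg (by positivity)]
    have e1 : |(((n : ℤ) + 1 : ℤ) : ℝ)| = (n : ℝ) + 1 := by push_cast; rw [abs_of_nonneg (by positivity)]
    have e2 : |(((n : ℤ) + 2 : ℤ) : ℝ)| = (n : ℝ) + 2 := by push_cast; rw [abs_of_nonneg (by positivity)]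
    rw [e0, e1, e2]
    have key := hG.lc (((n : ℝ) + 1) / lam) (1 / lam) (by positivity)
      (by rw [div_sub_div_same]; apply div_nonneg _ hlam.le; have hn' : (0:ℝ) ≤ (n:ℝ) := Nat.cast_nonneg n; linarith)
      (by rw [← add_div, div_lt_one hlam]; linarith)
    rw [div_sub_div_same, ← add_div] at key
    have ea : (n : ℝ) + 1 - 1 = (n : ℝ) := by ring
    have eb : (n : ℝ) + 1 + 1 = (n : ℝ) + 2 := by ring
    rw [ea, eb] at key
    exact key
  · have : wA lam φ ((n : ℤ) + 2) = 0 := by unfold wA; rw [if_neg h2]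
    rw [this, mul_zero]
    positivity
lemma wA_G (hG : GoodPhi φ) (hlam : 0 < lam) (m n : ℕ) (hmn : m ≤ n) :
    wA lam φ m * wA lam φ ((n : ℤ) + 1) ≤ wA lam φ ((m : ℤ) + 1) * wA lam φ n := by
  induction n, hmn using Nat.le_induction with
  | base => exact le_of_eq (mul_comm _ _)
  | succ n hmn ih =>
    have hcast : ((n + 1 : ℕ) : ℤ) = (n : ℤ) + 1 := by push_cast; ring
    rw [hcast]
    have hcast2 : ((n : ℤ) + 1) + 1 = (n : ℤ) + 2 := by ring
    rw [hcast2]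
    by_cases hz : wA lam φ ((n : ℤ) + 1) = 0
    · have h2 : wA lam φ ((n : ℤ) + 2) = 0 := by
        have ha := wA_anti (lam := lam) (φ := φ) hG hlam (t := (n : ℤ) + 1) (t' := (n : ℤ) + 2)
          (by omega) (by omega)
        have hb := wA_nonneg (lam := lam) (φ := φ) hG hlam ((n : ℤ) + 2)
        rw [hz] at ha; linarith
      rw [h2, hz, mul_zero, mul_zero]
    · have hpos : 0 < wA lam φ ((n : ℤ) + 1) :=
        lt_of_le_of_ne (wA_nonneg hG hlam _) (Ne.symm hz)
      have hlc := wA_lc_step hG hlam n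
      have h1 : wA lam φ m * wA lam φ ((n : ℤ) + 1) * wA lam φ ((n : ℤ) + 2)
          ≤ wA lam φ ((m : ℤ) + 1) * wA lam φ n * wA lam φ ((n : ℤ) + 2) :=
        mul_le_mul_of_nonneg_right ih (wA_nonneg hG hlam _)
      have h2 : wA lam φ ((m : ℤ) + 1) * (wA lam φ n * wA lam φ ((n : ℤ) + 2))
          ≤ wA lam φ ((m : ℤ) + 1) * wA lam φ ((n : ℤ) + 1) ^ 2 :=
        mul_le_mul_of_nonneg_left hlc (wA_nonneg hG hlam _)
      have h3 : wA lam φ m * wA lam φ ((n : ℤ) + 2) * wA lam φ ((n : ℤ) + 1)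
          ≤ wA lam φ ((m : ℤ) + 1) * wA lam φ ((n : ℤ) + 1) * wA lam φ ((n : ℤ) + 1) := by
        nlinarith [h1, h2]
      exact le_of_mul_le_mul_right h3 hpos


lemma wA_ratio_nn (hG : GoodPhi φ) (hlam : 0 < lam) (p q : ℤ) (hp : 0 ≤ p) (hpq : p ≤ q) :
    wA lam φ p * wA lam φ (q + 1) ≤ wA lam φ q * wA lam φ (p + 1) := by
  have hq : 0 ≤ q := le_trans hp hpq
  lift p to ℕ using hp with a
  lift q to ℕ using hq with b
  have hab : a ≤ b := by exact_mod_cast hpq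
  have := wA_G (lam := lam) hG hlam a b hab
  linarith [this]

lemma wA_ratio (hG : GoodPhi φ) (hlam : 0 < lam) (p q : ℤ) (hpq : p ≤ q) :
    wA lam φ p * wA lam φ (q + 1) ≤ wA lam φ q * wA lam φ (p + 1) := by
  rcases le_or_gt 0 p with hp | hp
  · exact wA_ratio_nn hG hlam p q hp hpq
  · rcases le_or_gt 0 q with hq | hq
    · -- p < 0 ≤ q : monotone on both factors
      have h1 : wA lam φ p ≤ wA lam φ (p + 1) := by
        rw [← wA_neg lam φ p, ← wA_neg lam φ (p + 1)]
        exact wA_anti hG hlam (t := -(p+1)) (t' := -p) (by omega) (by omega)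
      have h2 : wA lam φ (q + 1) ≤ wA lam φ q := wA_anti hG hlam hq (by omega)
      have := mul_le_mul h1 h2 (wA_nonneg hG hlam _) (wA_nonneg hG hlam _)
      linarith [this]
    · -- q < 0 : mirror
      have H := wA_ratio_nn hG hlam (-q - 1) (-p - 1) (by omega) (by omega)
      have e1 : (-q - 1 : ℤ) = -(q + 1) := by ring
      have e2 : (-p - 1 : ℤ) = -(p + 1) := by ring
      have e3 : (-q - 1 + 1 : ℤ) = -q := by ring
      have e4 : (-p - 1 + 1 : ℤ) = -p := by ring
      rw [e3, e4, e1, e2] at H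
      rw [wA_neg, wA_neg, wA_neg, wA_neg] at H
      linarith [H]

lemma wA_mlr (hG : GoodPhi φ) (hlam : 0 < lam) (m s u : ℤ) (h : s ≤ u) :
    wA lam φ (2*s - m - 1) * wA lam φ (2*u - m) ≤ wA lam φ (2*u - m - 1) * wA lam φ (2*s - m) := by
  have H := wA_ratio hG hlam (2*s - m - 1) (2*u - m - 1) (by omega)
  rw [show (2*s - m - 1 + 1 : ℤ) = 2*s - m by ring, show (2*u - m - 1 + 1 : ℤ) = 2*u - m by ring] at H
  exact H

/-- The rearrangement / stochastic-dominance inequality. -/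
lemma dominance {T : Finset ℤ} {b c f : ℤ → ℝ} (hf : Monotone f)
    (hmlr : ∀ s u : ℤ, s ≤ u → c s * b u ≤ c u * b s) :
    (∑ s ∈ T, b s * f s) * (∑ u ∈ T, c u) ≤ (∑ s ∈ T, c s * f s) * (∑ u ∈ T, b u) := by
  have key : 0 ≤ ∑ s ∈ T, ∑ u ∈ T, (c s * b u - b s * c u) * (f s - f u) := by
    refine Finset.sum_nonneg fun s _ => Finset.sum_nonneg fun u _ => ?_
    rcases le_total s u with h | h
    · have h1 : c s * b u - b s * c u ≤ 0 := by linarith [hmlr s u h]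
      have h2 : f s - f u ≤ 0 := by linarith [hf h]
      nlinarith [h1, h2]
    · have h1 : 0 ≤ c s * b u - b s * c u := by linarith [hmlr u s h]
      have h2 : 0 ≤ f s - f u := by linarith [hf h]
      exact mul_nonneg h1 h2
  have expand : ∑ s ∈ T, ∑ u ∈ T, (c s * b u - b s * c u) * (f s - f u)
      = 2 * ((∑ s ∈ T, c s * f s) * (∑ u ∈ T, b u) - (∑ s ∈ T, b s * f s) * (∑ u ∈ T, c u)) := by
    have hterm : ∀ s u : ℤ, (c s * b u - b s * c u) * (f s - f u)
        = (c s * f s) * b u - c s * (b u * f u) - (b s * f s) * c u + b s * (c u * f u) := by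
      intro s u; ring
    simp only [hterm]
    rw [Finset.sum_congr rfl (fun s _ => by
      rw [Finset.sum_add_distrib, Finset.sum_sub_distrib, Finset.sum_sub_distrib])]
    rw [Finset.sum_add_distrib, Finset.sum_sub_distrib, Finset.sum_sub_distrib]
    rw [← Finset.sum_mul_sum T T (fun s => c s * f s) (fun u => b u)]
    rw [← Finset.sum_mul_sum T T (fun s => c s) (fun u => b u * f u)]
    rw [← Finset.sum_mul_sum T T (fun s => b s * f s) (fun u => c u)]
    rw [← Finset.sum_mul_sum T T (fun s => b s) (fun u => c u * f u)]
    ring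
  rw [expand] at key
  linarith [key]


/-- integer bound from a real bound -/
lemma int_bound {d : ℤ} (h : |(d : ℝ)| < lam) : -⌈lam⌉ ≤ d ∧ d ≤ ⌈lam⌉ := by
  have h1 : |(d : ℝ)| ≤ (⌈lam⌉ : ℝ) := le_trans h.le (Int.le_ceil lam)
  rw [abs_le] at h1
  exact ⟨by exact_mod_cast h1.1, by exact_mod_cast h1.2⟩

lemma Swlpr_eq (hlam : 0 < lam) (f : ℤ → ℝ) (m : ℤ) {T : Finset ℤ}
    (hT : ∀ l : ℤ, |((2 * l - m : ℤ) : ℝ)| < lam → l ∈ T) :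
    Swlpr lam (fun x => φ |x|) f m =
      (∑ l ∈ T, wA lam φ (2 * l - m) * f l) / (∑ l ∈ T, wA lam φ (2 * l - m)) := by
  have hw : ∀ l : ℤ, (if |((2 * l - m : ℤ) : ℝ)| < lam
      then (fun x => φ |x|) (((2 * l - m : ℤ) : ℝ) / lam) else 0) = wA lam φ (2 * l - m) := by
    intro l
    simp only [wA, abs_div, abs_of_pos hlam]
  unfold Swlpr
  rw [finsum_eq_finset_sum_of_support_subset
      (fun l : ℤ => (if |((2 * l - m : ℤ) : ℝ)| < lam
        then (fun x => φ |x|) (((2 * l - m : ℤ) : ℝ) / lam) else 0) * f l) (s := T) ?h1,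
    finsum_eq_finset_sum_of_support_subset
      (fun l : ℤ => if |((2 * l - m : ℤ) : ℝ)| < lam
        then (fun x => φ |x|) (((2 * l - m : ℤ) : ℝ) / lam) else 0) (s := T) ?h2]
  · congr 1
    · exact Finset.sum_congr rfl (fun l _ => by rw [hw l])
    · exact Finset.sum_congr rfl (fun l _ => hw l)
  case h1 =>
    intro l hl
    simp only [Function.mem_support] at hl
    by_contra hmem
    by_cases hc : |((2 * l - m : ℤ) : ℝ)| < lam
    · exact hmem (hT l hc)
    · rw [if_neg hc, zero_mul] at hl; exact hl rfl
  case h2 =>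
    intro l hl
    simp only [Function.mem_support] at hl
    by_contra hmem
    by_cases hc : |((2 * l - m : ℤ) : ℝ)| < lam
    · exact hmem (hT l hc)
    · rw [if_neg hc] at hl; exact hl rfl

lemma denom_pos (hG : GoodPhi φ) (hlam : 1 < lam) (m : ℤ) {T : Finset ℤ}
    (hT : ∀ l : ℤ, |((2 * l - m : ℤ) : ℝ)| < lam → l ∈ T) :
    0 < ∑ l ∈ T, wA lam φ (2 * l - m) := by
  have hlam0 : (0:ℝ) < lam := lt_trans one_pos hlam
  set l₀ : ℤ := (m + 1) / 2 with hl₀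
  have hd : 0 ≤ 2 * l₀ - m ∧ 2 * l₀ - m ≤ 1 := by omega
  have habs : |((2 * l₀ - m : ℤ) : ℝ)| < lam := by
    have : ((2 * l₀ - m : ℤ) : ℝ) = ((2 * l₀ - m : ℤ) : ℝ) := rfl
    rw [abs_of_nonneg (by exact_mod_cast hd.1)]
    have : ((2 * l₀ - m : ℤ) : ℝ) ≤ 1 := by exact_mod_cast hd.2
    linarith
  refine Finset.sum_pos' (fun i _ => wA_nonneg hG hlam0 _) ⟨l₀, hT l₀ habs, wA_pos hG hlam0 habs⟩

lemma mono_step (hG : GoodPhi φ) (hlam : 1 < lam) {f : ℤ → ℝ} (hf : Monotone f) :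
    Monotone (Swlpr lam (fun x => φ |x|) f) := by
  have hlam0 : (0:ℝ) < lam := lt_trans one_pos hlam
  apply monotone_int_of_le_succ
  intro m
  set C : ℤ := ⌈lam⌉ with hC
  set T : Finset ℤ := Finset.Icc ((m - C) / 2 - 1) ((m + C) / 2 + 2) with hTdef
  have hTm : ∀ l : ℤ, |((2 * l - m : ℤ) : ℝ)| < lam → l ∈ T := by
    intro l h
    obtain ⟨h1, h2⟩ := int_bound h
    rw [hTdef, Finset.mem_Icc]
    omega
  have hTm1 : ∀ l : ℤ, |((2 * l - (m + 1) : ℤ) : ℝ)| < lam → l ∈ T := by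
    intro l h
    obtain ⟨h1, h2⟩ := int_bound h
    rw [hTdef, Finset.mem_Icc]
    omega
  rw [Swlpr_eq hlam0 f m hTm, Swlpr_eq hlam0 f (m + 1) hTm1]
  rw [div_le_div_iff₀ (denom_pos hG hlam m hTm) (denom_pos hG hlam (m + 1) hTm1)]
  have hrw : ∀ l : ℤ, (2 * l - (m + 1) : ℤ) = 2 * l - m - 1 := fun l => by ring
  simp only [hrw]
  exact dominance hf (fun s u hsu => wA_mlr hG hlam0 m s u hsu)


lemma goodPhi_of_cases (φ : ℝ → ℝ)
    (hφ : (∀ x : ℝ, φ x = 1) ∨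
          (∀ x ∈ Set.Ico (0 : ℝ) 1, φ x = 1 - x) ∨
          (∀ x ∈ Set.Ico (0 : ℝ) 1, φ x = 1 - x ^ 2) ∨
          (∀ x ∈ Set.Ico (0 : ℝ) 1, φ x = (1 - x ^ 2) ^ 2) ∨
          (∀ x ∈ Set.Ico (0 : ℝ) 1, φ x = (1 - x ^ 3) ^ 3) ∨
          (∀ x ∈ Set.Ico (0 : ℝ) 1, φ x = (1 - x ^ 2) ^ 3) ∨
          (∃ ξ : ℝ, 0 < ξ ∧ ∀ x ∈ Set.Ico (0 : ℝ) 1, φ x = Real.exp (-ξ * x))) :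
    GoodPhi φ := by
  have mem : ∀ x h : ℝ, 0 ≤ h → 0 ≤ x - h → x + h < 1 →
      (x - h) ∈ Set.Ico (0:ℝ) 1 ∧ (x + h) ∈ Set.Ico (0:ℝ) 1 ∧ x ∈ Set.Ico (0:ℝ) 1 := by
    intro x h h0 h1 h2
    refine ⟨⟨h1, by linarith⟩, ⟨by linarith, h2⟩, ⟨by linarith, by linarith⟩⟩
  rcases hφ with h | h | h | h | h | h | ⟨ξ, hξ, h⟩
  · exact ⟨fun x _ _ => by rw [h x]; norm_num,
      fun x y _ _ _ => by rw [h x, h y],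
      fun x t _ _ _ => by rw [h x, h (x - t), h (x + t)]; norm_num⟩
  · refine ⟨fun x hx hx1 => ?_, fun x y hx hxy hy1 => ?_, fun x t h0 h1 h2 => ?_⟩
    · rw [h x ⟨hx, hx1⟩]; linarith
    · rw [h x ⟨hx, by linarith⟩, h y ⟨by linarith, hy1⟩]; linarith
    · obtain ⟨m1, m2, m3⟩ := mem x t h0 h1 h2
      rw [h _ m1, h _ m2, h _ m3]; nlinarith [sq_nonneg t]
  · refine ⟨fun x hx hx1 => ?_, fun x y hx hxy hy1 => ?_, fun x t h0 h1 h2 => ?_⟩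
    · rw [h x ⟨hx, hx1⟩]; nlinarith
    · rw [h x ⟨hx, by linarith⟩, h y ⟨by linarith, hy1⟩]; nlinarith
    · obtain ⟨m1, m2, m3⟩ := mem x t h0 h1 h2
      rw [h _ m1, h _ m2, h _ m3]
      have ht1 : t ≤ 1 := by linarith
      have k2 : 0 ≤ 2 + 2*x^2 - t^2 := by nlinarith [sq_nonneg x]
      nlinarith [mul_nonneg (sq_nonneg t) k2]
  · -- (1-x^2)^2
    refine ⟨fun x hx hx1 => ?_, fun x y hx hxy hy1 => ?_, fun x t h0 h1 h2 => ?_⟩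
    · rw [h x ⟨hx, hx1⟩]
      have : 0 < 1 - x^2 := by nlinarith
      positivity
    · rw [h x ⟨hx, by linarith⟩, h y ⟨by linarith, hy1⟩]
      have u : 0 ≤ 1 - y^2 := by nlinarith
      have v : 1 - y^2 ≤ 1 - x^2 := by nlinarith
      exact pow_le_pow_left₀ u v 2
    · obtain ⟨m1, m2, m3⟩ := mem x t h0 h1 h2
      rw [h _ m1, h _ m2, h _ m3]
      have ht1 : t ≤ 1 := by linarith
      have hx0 : 0 ≤ x := by linarith
      have k2 : 0 ≤ 2 + 2*x^2 - t^2 := by nlinarith [sq_nonneg x]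
      have base : (1 - (x - t)^2) * (1 - (x + t)^2) ≤ (1 - x^2)^2 := by
        nlinarith [mul_nonneg (sq_nonneg t) k2]
      have n1 : 0 ≤ 1 - (x - t)^2 := by nlinarith [pow_le_one₀ (n := 2) h1 (by linarith : x - t ≤ 1)]
      have n2 : 0 ≤ 1 - (x + t)^2 := by nlinarith [pow_le_one₀ (n := 2) (by linarith : (0:ℝ) ≤ x + t) (by linarith : x + t ≤ 1)]
      nlinarith [mul_self_le_mul_self (mul_nonneg n1 n2) base]
  · -- (1-x^3)^3
    refine ⟨fun x hx hx1 => ?_, fun x y hx hxy hy1 => ?_, fun x t h0 h1 h2 => ?_⟩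
    · rw [h x ⟨hx, hx1⟩]
      have : 0 < 1 - x^3 := by nlinarith [pow_lt_one₀ hx hx1 (by norm_num : 3 ≠ 0)]
      positivity
    · rw [h x ⟨hx, by linarith⟩, h y ⟨by linarith, hy1⟩]
      have u : 0 ≤ 1 - y^3 := by nlinarith [pow_le_one₀ (n := 3) (by linarith : (0:ℝ) ≤ y) hy1.le]
      have v : 1 - y^3 ≤ 1 - x^3 := by nlinarith [pow_le_pow_left₀ hx hxy 3]
      exact pow_le_pow_left₀ u v 3
    · obtain ⟨m1, m2, m3⟩ := mem x t h0 h1 h2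
      rw [h _ m1, h _ m2, h _ m3]
      have ht1 : t ≤ 1 := by linarith
      have hx0 : 0 ≤ x := by linarith
      have e1 : x * t^2 ≤ 1 := by nlinarith
      have e2 : 3*x^2*t^4 ≤ 3*x*t^2 := by
        nlinarith [mul_nonneg (mul_nonneg hx0 (sq_nonneg t)) (sub_nonneg.2 e1)]
      have base : (1 - (x - t)^3) * (1 - (x + t)^3) ≤ (1 - x^3)^2 := by
        nlinarith [e2, mul_nonneg hx0 (sq_nonneg t), mul_nonneg (pow_nonneg hx0 4) (sq_nonneg t), pow_nonneg h0 6]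
      have n1 : 0 ≤ 1 - (x - t)^3 := by nlinarith [pow_le_one₀ (n := 3) h1 (by linarith : x - t ≤ 1)]
      have n2 : 0 ≤ 1 - (x + t)^3 := by nlinarith [pow_le_one₀ (n := 3) (by linarith : (0:ℝ) ≤ x + t) (by linarith : x + t ≤ 1)]
      calc (1 - (x - t)^3)^3 * (1 - (x + t)^3)^3
          = ((1 - (x - t)^3) * (1 - (x + t)^3))^3 := by ring
        _ ≤ ((1 - x^3)^2)^3 := pow_le_pow_left₀ (mul_nonneg n1 n2) base 3
        _ = ((1 - x^3)^3)^2 := by ring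
  · -- (1-x^2)^3
    refine ⟨fun x hx hx1 => ?_, fun x y hx hxy hy1 => ?_, fun x t h0 h1 h2 => ?_⟩
    · rw [h x ⟨hx, hx1⟩]
      have : 0 < 1 - x^2 := by nlinarith
      positivity
    · rw [h x ⟨hx, by linarith⟩, h y ⟨by linarith, hy1⟩]
      have u : 0 ≤ 1 - y^2 := by nlinarith
      have v : 1 - y^2 ≤ 1 - x^2 := by nlinarith
      exact pow_le_pow_left₀ u v 3
    · obtain ⟨m1, m2, m3⟩ := mem x t h0 h1 h2
      rw [h _ m1, h _ m2, h _ m3]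
      have ht1 : t ≤ 1 := by linarith
      have hx0 : 0 ≤ x := by linarith
      have k2 : 0 ≤ 2 + 2*x^2 - t^2 := by nlinarith [sq_nonneg x]
      have base : (1 - (x - t)^2) * (1 - (x + t)^2) ≤ (1 - x^2)^2 := by
        nlinarith [mul_nonneg (sq_nonneg t) k2]
      have n1 : 0 ≤ 1 - (x - t)^2 := by nlinarith [pow_le_one₀ (n := 2) h1 (by linarith : x - t ≤ 1)]
      have n2 : 0 ≤ 1 - (x + t)^2 := by nlinarith [pow_le_one₀ (n := 2) (by linarith : (0:ℝ) ≤ x + t) (by linarith : x + t ≤ 1)]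
      calc (1 - (x - t)^2)^3 * (1 - (x + t)^2)^3
          = ((1 - (x - t)^2) * (1 - (x + t)^2))^3 := by ring
        _ ≤ ((1 - x^2)^2)^3 := pow_le_pow_left₀ (mul_nonneg n1 n2) base 3
        _ = ((1 - x^2)^3)^2 := by ring
  · -- exp(-ξ x)
    refine ⟨fun x hx hx1 => ?_, fun x y hx hxy hy1 => ?_, fun x t h0 h1 h2 => ?_⟩
    · rw [h x ⟨hx, hx1⟩]; exact Real.exp_pos _
    · rw [h x ⟨hx, by linarith⟩, h y ⟨by linarith, hy1⟩]
      exact Real.exp_le_exp.2 (by nlinarith)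
    · obtain ⟨m1, m2, m3⟩ := mem x t h0 h1 h2
      rw [h _ m1, h _ m2, h _ m3]
      apply le_of_eq
      rw [← Real.exp_add, sq, ← Real.exp_add]
      congr 1
      ring


end Stmt14Aux

theorem stmt14 (lam : ℝ) (hlam : 1 < lam) (hlamnat : ∀ k : ℕ, lam ≠ (k : ℝ))
    (φ : ℝ → ℝ)
    (hφ : (∀ x : ℝ, φ x = 1) ∨
          (∀ x ∈ Set.Ico (0 : ℝ) 1, φ x = 1 - x) ∨
          (∀ x ∈ Set.Ico (0 : ℝ) 1, φ x = 1 - x ^ 2) ∨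
          (∀ x ∈ Set.Ico (0 : ℝ) 1, φ x = (1 - x ^ 2) ^ 2) ∨
          (∀ x ∈ Set.Ico (0 : ℝ) 1, φ x = (1 - x ^ 3) ^ 3) ∨
          (∀ x ∈ Set.Ico (0 : ℝ) 1, φ x = (1 - x ^ 2) ^ 3) ∨
          (∃ ξ : ℝ, 0 < ξ ∧ ∀ x ∈ Set.Ico (0 : ℝ) 1, φ x = Real.exp (-ξ * x))) :
    ∀ f : ℤ → ℝ, IsBoundedSeq f → Monotone f →
      ∀ F : ℝ → ℝ, Continuous F →
        ConvergesUniformlyTo (Swlpr lam (fun x => φ |x|)) f F →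
        Monotone F := by
  have hG : Stmt14Aux.GoodPhi φ := Stmt14Aux.goodPhi_of_cases φ hφ
  intro f _hfb hf F hF hconv
  set S : (ℤ → ℝ) → (ℤ → ℝ) := Swlpr lam (fun x => φ |x|) with hSdef
  have S_mono : ∀ {g : ℤ → ℝ}, Monotone g → Monotone (S g) :=
    fun hg => Stmt14Aux.mono_step hG hlam hg
  have hiter : ∀ k : ℕ, Monotone (S^[k] f) := by
    intro k
    induction k with
    | zero => simpa using hf
    | succ n ih => rw [Function.iterate_succ_apply']; exact S_mono ih
  intro x y hxy
  refine le_of_forall_pos_le_add fun ε hε => ?_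
  obtain ⟨K, hK⟩ := hconv (ε / 4) (by linarith)
  obtain ⟨δ₁, hδ₁, hcx⟩ := Metric.continuous_iff.1 hF x (ε / 4) (by linarith)
  obtain ⟨δ₂, hδ₂, hcy⟩ := Metric.continuous_iff.1 hF y (ε / 4) (by linarith)
  set δ : ℝ := min δ₁ δ₂ with hδdef
  have hδpos : 0 < δ := lt_min hδ₁ hδ₂
  obtain ⟨k₀, hk₀⟩ := pow_unbounded_of_one_lt (1 / δ) (one_lt_two (α := ℝ))
  set k : ℕ := max k₀ K with hkdef
  have h2k : (1 : ℝ) / δ < 2 ^ k :=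
    lt_of_lt_of_le hk₀ (pow_le_pow_right₀ one_le_two (le_max_left _ _))
  have hkpos : (0 : ℝ) < 2 ^ k := by positivity
  have hdyk : (1 : ℝ) / 2 ^ k < δ := by
    rw [div_lt_iff₀ hkpos]
    rw [div_lt_iff₀ hδpos] at h2k
    linarith [h2k]
  set j : ℤ := ⌈(2 : ℝ) ^ k * x⌉ with hjdef
  set j' : ℤ := ⌈(2 : ℝ) ^ k * y⌉ with hjdef'
  have hjj : j ≤ j' := Int.ceil_le_ceil (by nlinarith)
  have hx1 : x ≤ (j : ℝ) / 2 ^ k := by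
    rw [le_div_iff₀ hkpos]
    have := Int.le_ceil ((2 : ℝ) ^ k * x)
    linarith [this]
  have hx2 : (j : ℝ) / 2 ^ k < x + δ := by
    rw [div_lt_iff₀ hkpos]
    have := Int.ceil_lt_add_one ((2 : ℝ) ^ k * x)
    have h1 : (1:ℝ) < δ * 2 ^ k := by
      rw [div_lt_iff₀ hkpos] at hdyk; linarith [hdyk]
    nlinarith [this, h1]
  have hy1 : y ≤ (j' : ℝ) / 2 ^ k := by
    rw [le_div_iff₀ hkpos]
    have := Int.le_ceil ((2 : ℝ) ^ k * y)
    linarith [this]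
  have hy2 : (j' : ℝ) / 2 ^ k < y + δ := by
    rw [div_lt_iff₀ hkpos]
    have := Int.ceil_lt_add_one ((2 : ℝ) ^ k * y)
    have h1 : (1:ℝ) < δ * 2 ^ k := by
      rw [div_lt_iff₀ hkpos] at hdyk; linarith [hdyk]
    nlinarith [this, h1]
  have hFx : |F ((j : ℝ) / 2 ^ k) - F x| < ε / 4 := by
    have := hcx ((j : ℝ) / 2 ^ k) (by
      rw [Real.dist_eq, abs_lt]
      constructor
      · have : δ ≤ δ₁ := min_le_left _ _
        nlinarith [hx1]
      · have : δ ≤ δ₁ := min_le_left _ _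
        nlinarith [hx2])
    rwa [Real.dist_eq] at this
  have hFy : |F ((j' : ℝ) / 2 ^ k) - F y| < ε / 4 := by
    have := hcy ((j' : ℝ) / 2 ^ k) (by
      rw [Real.dist_eq, abs_lt]
      constructor
      · have : δ ≤ δ₂ := min_le_right _ _
        nlinarith [hy1]
      · have : δ ≤ δ₂ := min_le_right _ _
        nlinarith [hy2])
    rwa [Real.dist_eq] at this
  have e1 := hK k (le_max_right _ _) j
  have e2 := hK k (le_max_right _ _) j'
  have emono : (S^[k] f) j ≤ (S^[k] f) j' := hiter k hjj
  rw [abs_le] at e1 e2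
  rw [abs_lt] at hFx hFy
  linarith [e1.1, e1.2, e2.1, e2.2, hFx.1, hFx.2, hFy.1, hFy.2, emono]
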